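/- (Theorem 3.1(i)) Assume there exists a Hermitian X_P with R_{X_P} positive definite and X_P ≤ R(X_P), and there exists a Hermitian matrix in dom(R) with ρ(T̂) < 1. Let X_0 ∈ S_≥ and define X_{k+1} := R(X_k) for k ≥ 0. Then the sequence is well-defined (each R_{X_k} is invertible, indeed positive definite), and for all k ≥ 0: X_k ∈ S_≥, ρ(T̂_{X_k}) < 1, and X_k ≥ R(X_k). -/

import Mathlib

open Matrix Filter Topology
open scoped ComplexOrder

noncomputable section

namespace CDARE

variable {n m : ℕ}

/-- Entrywise complex conjugate of a matrix. -/
def mconj {p q : ℕ} (M : Matrix (Fin p) (Fin q) ℂ) : Matrix (Fin p) (Fin q) ℂ :=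
  M.map (starRingEnd ℂ)

/-- `hatM M = conj M * M`. -/
def hatM (M : Matrix (Fin n) (Fin n) ℂ) : Matrix (Fin n) (Fin n) ℂ := mconj M * M

/-- `R_X = R + Bᴴ X̄ B`. -/
def RX (R : Matrix (Fin m) (Fin m) ℂ) (B : Matrix (Fin n) (Fin m) ℂ)
    (X : Matrix (Fin n) (Fin n) ℂ) : Matrix (Fin m) (Fin m) ℂ :=
  R + Bᴴ * mconj X * B

/-- `F_X = R_X⁻¹ Bᴴ X̄ A`. -/
def FX (A : Matrix (Fin n) (Fin n) ℂ) (B : Matrix (Fin n) (Fin m) ℂ)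
    (R : Matrix (Fin m) (Fin m) ℂ) (X : Matrix (Fin n) (Fin n) ℂ) :
    Matrix (Fin m) (Fin n) ℂ :=
  (RX R B X)⁻¹ * (Bᴴ * mconj X * A)

/-- `T_X = A - B F_X`. -/
def TX (A : Matrix (Fin n) (Fin n) ℂ) (B : Matrix (Fin n) (Fin m) ℂ)
    (R : Matrix (Fin m) (Fin m) ℂ) (X : Matrix (Fin n) (Fin n) ℂ) :
    Matrix (Fin n) (Fin n) ℂ :=
  A - B * FX A B R X

/-- The Riccati operator `R(X)`. -/
def Rop (A : Matrix (Fin n) (Fin n) ℂ) (B : Matrix (Fin n) (Fin m) ℂ)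
    (R : Matrix (Fin m) (Fin m) ℂ) (H : Matrix (Fin n) (Fin n) ℂ)
    (X : Matrix (Fin n) (Fin n) ℂ) : Matrix (Fin n) (Fin n) ℂ :=
  Aᴴ * mconj X * A - Aᴴ * mconj X * B * (RX R B X)⁻¹ * (Bᴴ * mconj X * A) + H

/-- `H_X = H + F_Xᴴ R F_X`. -/
def HX (A : Matrix (Fin n) (Fin n) ℂ) (B : Matrix (Fin n) (Fin m) ℂ)
    (R : Matrix (Fin m) (Fin m) ℂ) (H : Matrix (Fin n) (Fin n) ℂ)
    (X : Matrix (Fin n) (Fin n) ℂ) : Matrix (Fin n) (Fin n) ℂ :=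
  H + (FX A B R X)ᴴ * R * FX A B R X

/-- `K(Y, X) = (F_Y - F_X)ᴴ R_X (F_Y - F_X)`. -/
def Kop (A : Matrix (Fin n) (Fin n) ℂ) (B : Matrix (Fin n) (Fin m) ℂ)
    (R : Matrix (Fin m) (Fin m) ℂ) (Y X : Matrix (Fin n) (Fin n) ℂ) :
    Matrix (Fin n) (Fin n) ℂ :=
  (FX A B R Y - FX A B R X)ᴴ * RX R B X * (FX A B R Y - FX A B R X)

/-- Conjugate Stein operator `C_C(X) = X - Cᴴ X̄ C`. -/
def CStein (C X : Matrix (Fin n) (Fin n) ℂ) : Matrix (Fin n) (Fin n) ℂ :=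
  X - Cᴴ * mconj X * C

/-- The set `S_≥`. -/
def Sge (A : Matrix (Fin n) (Fin n) ℂ) (B : Matrix (Fin n) (Fin m) ℂ)
    (R : Matrix (Fin m) (Fin m) ℂ) (H : Matrix (Fin n) (Fin n) ℂ) :
    Set (Matrix (Fin n) (Fin n) ℂ) :=
  {X | X.IsHermitian ∧ ∃ XT : Matrix (Fin n) (Fin n) ℂ, XT.IsHermitian ∧
      IsUnit (RX R B XT) ∧ spectralRadius ℂ (hatM (TX A B R XT)) < 1 ∧
      (CStein (TX A B R XT) X - HX A B R H XT).PosSemidef}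


open scoped ENNReal NNReal

section AuxiliaryLemmas

@[simp] lemma mconj_apply {p q : ℕ} (M : Matrix (Fin p) (Fin q) ℂ) (i j) :
    mconj M i j = star (M i j) := rfl

lemma mconj_add {p q : ℕ} (M N : Matrix (Fin p) (Fin q) ℂ) :
    mconj (M + N) = mconj M + mconj N := by ext i j; simp

lemma mconj_sub {p q : ℕ} (M N : Matrix (Fin p) (Fin q) ℂ) :
    mconj (M - N) = mconj M - mconj N := by ext i j; simp

lemma mconj_mul {p q r : ℕ} (M : Matrix (Fin p) (Fin q) ℂ) (N : Matrix (Fin q) (Fin r) ℂ) :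
    mconj (M * N) = mconj M * mconj N := Matrix.map_mul

lemma mconj_mconj {p q : ℕ} (M : Matrix (Fin p) (Fin q) ℂ) : mconj (mconj M) = M := by
  ext i j; simp

lemma mconj_conjTranspose {p q : ℕ} (M : Matrix (Fin p) (Fin q) ℂ) :
    mconj (Mᴴ) = Mᵀ := by ext i j; simp [Matrix.conjTranspose_apply]

lemma conjTranspose_mconj {p q : ℕ} (M : Matrix (Fin p) (Fin q) ℂ) :
    (mconj M)ᴴ = Mᵀ := by ext i j; simp [Matrix.conjTranspose_apply]

lemma mconj_eq_transpose {n : ℕ} {X : Matrix (Fin n) (Fin n) ℂ} (hX : X.IsHermitian) :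
    mconj X = Xᵀ := by
  conv_lhs => rw [← hX.eq]
  exact mconj_conjTranspose X

lemma mconj_isHermitian {n : ℕ} {X : Matrix (Fin n) (Fin n) ℂ} (hX : X.IsHermitian) :
    (mconj X).IsHermitian := by
  show (mconj X)ᴴ = mconj X
  rw [conjTranspose_mconj, mconj_eq_transpose hX]

lemma mconj_posSemidef {n : ℕ} {X : Matrix (Fin n) (Fin n) ℂ} (hX : X.PosSemidef) :
    (mconj X).PosSemidef := by
  rw [mconj_eq_transpose hX.isHermitian]; exact hX.transpose

lemma mconj_mulVec {p q : ℕ} (M : Matrix (Fin p) (Fin q) ℂ) (w : Fin q → ℂ) :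
    mconj M *ᵥ w = star (M *ᵥ star w) := by
  ext i
  simp [Matrix.mulVec, dotProduct, mul_comm]

def qf {p : ℕ} (M : Matrix (Fin p) (Fin p) ℂ) (x : Fin p → ℂ) : ℂ :=
  dotProduct (star x) (M *ᵥ x)

lemma qf_add {p : ℕ} (M N : Matrix (Fin p) (Fin p) ℂ) (x : Fin p → ℂ) :
    qf (M + N) x = qf M x + qf N x := by
  simp [qf, Matrix.add_mulVec, dotProduct_add]

lemma qf_sub {p : ℕ} (M N : Matrix (Fin p) (Fin p) ℂ) (x : Fin p → ℂ) :
    qf (M - N) x = qf M x - qf N x := by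
  simp [qf, Matrix.sub_mulVec, dotProduct_sub]

lemma qf_nonneg {p : ℕ} {M : Matrix (Fin p) (Fin p) ℂ} (hM : M.PosSemidef) (x : Fin p → ℂ) :
    0 ≤ qf M x := hM.dotProduct_mulVec_nonneg x

lemma qf_smul {p : ℕ} (M : Matrix (Fin p) (Fin p) ℂ) (c : ℂ) (x : Fin p → ℂ) :
    qf M (c • x) = (star c * c) * qf M x := by
  simp [qf, Matrix.mulVec_smul, smul_dotProduct, dotProduct_smul, star_smul,
    smul_eq_mul]
  ring

lemma qf_conj {p q : ℕ} (C : Matrix (Fin p) (Fin q) ℂ) (M : Matrix (Fin p) (Fin p) ℂ)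
    (x : Fin q → ℂ) : qf (Cᴴ * M * C) x = qf M (C *ᵥ x) := by
  simp only [qf, Matrix.star_mulVec, Matrix.dotProduct_mulVec, Matrix.vecMul_vecMul,
    Matrix.mul_assoc]

lemma qf_mconj {p : ℕ} (M : Matrix (Fin p) (Fin p) ℂ) (x : Fin p → ℂ) :
    qf (mconj M) x = star (qf M (star x)) := by
  simp only [qf, mconj_mulVec, star_star]
  rw [Matrix.star_dotProduct_star, dotProduct_comm]

lemma qf_real {p : ℕ} {M : Matrix (Fin p) (Fin p) ℂ} (hM : M.IsHermitian) (x : Fin p → ℂ) :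
    star (qf M x) = qf M x := by
  rw [qf, ← Matrix.star_dotProduct_star, star_star, Matrix.star_mulVec,
    ← Matrix.dotProduct_mulVec, hM.eq]


section Chain
variable {T Θ : Matrix (Fin n) (Fin n) ℂ} {v : Fin n → ℂ} {lam : ℂ}

lemma mulVec_star_of_hat (hv : hatM T *ᵥ v = lam • v) :
    T *ᵥ star (T *ᵥ v) = star lam • star v := by
  have h1 : mconj T *ᵥ (T *ᵥ v) = lam • v := by
    rw [Matrix.mulVec_mulVec]; exact hv
  rw [mconj_mulVec] at h1
  have := congrArg star h1
  rwa [star_star, star_smul] at this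

lemma qf_cstein (Θ : Matrix (Fin n) (Fin n) ℂ) (T : Matrix (Fin n) (Fin n) ℂ)
    (w : Fin n → ℂ) : qf (CStein T Θ) w = qf Θ w - qf (mconj Θ) (T *ᵥ w) := by
  rw [CStein, qf_sub, qf_conj]

lemma chain (hΘ : Θ.IsHermitian) (hv : hatM T *ᵥ v = lam • v) :
    qf (CStein T Θ) v + qf (CStein T Θ) (star (T *ᵥ v))
      = (1 - lam * star lam) * qf Θ v := by
  have h2 := mulVec_star_of_hat hv
  rw [qf_cstein, qf_cstein, h2]
  have e1 : qf (mconj Θ) (T *ᵥ v) = qf Θ (star (T *ᵥ v)) := by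
    rw [qf_mconj, qf_real hΘ]
  have e2 : qf (mconj Θ) (star lam • star v) = (lam * star lam) * qf Θ v := by
    rw [qf_smul, qf_mconj, star_star, qf_real hΘ, star_star]
  rw [e1, e2]; ring

end Chain

section Identities
variable (A : Matrix (Fin n) (Fin n) ℂ) (B : Matrix (Fin n) (Fin m) ℂ)
  (R H : Matrix (Fin m) (Fin m) ℂ)

lemma RX_isHermitian {X : Matrix (Fin n) (Fin n) ℂ} (hR : R.IsHermitian)
    (hX : X.IsHermitian) (B : Matrix (Fin n) (Fin m) ℂ) : (RX R B X).IsHermitian := by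
  show (RX R B X)ᴴ = RX R B X
  rw [RX, Matrix.conjTranspose_add, hR.eq, Matrix.conjTranspose_mul,
    Matrix.conjTranspose_mul, Matrix.conjTranspose_conjTranspose,
    (mconj_isHermitian hX).eq, Matrix.mul_assoc]

lemma RX_mul_FX {X : Matrix (Fin n) (Fin n) ℂ} (A : Matrix (Fin n) (Fin n) ℂ)
    (hux : IsUnit (RX R B X)) :
    RX R B X * FX A B R X = Bᴴ * mconj X * A := by
  rw [FX, ← Matrix.mul_assoc, Matrix.mul_nonsing_inv _ ((Matrix.isUnit_iff_isUnit_det _).mp hux),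
    Matrix.one_mul]

lemma FX_mul_RX {X : Matrix (Fin n) (Fin n) ℂ} (hR : R.IsHermitian) (hX : X.IsHermitian)
    (hux : IsUnit (RX R B X)) :
    (FX A B R X)ᴴ * RX R B X = Aᴴ * mconj X * B := by
  have h := congrArg Matrix.conjTranspose (RX_mul_FX B R A hux)
  rw [Matrix.conjTranspose_mul, (RX_isHermitian R hR hX B).eq] at h
  rw [h, Matrix.conjTranspose_mul, Matrix.conjTranspose_mul,
    Matrix.conjTranspose_conjTranspose, (mconj_isHermitian hX).eq, Matrix.mul_assoc]

lemma Rop_eq {X : Matrix (Fin n) (Fin n) ℂ} (H : Matrix (Fin n) (Fin n) ℂ)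
    (hR : R.IsHermitian) (hX : X.IsHermitian) (hux : IsUnit (RX R B X)) :
    Rop A B R H X
      = Aᴴ * mconj X * A - (FX A B R X)ᴴ * (RX R B X * FX A B R X) + H := by
  have h2 : Aᴴ * mconj X * B * (RX R B X)⁻¹ * (Bᴴ * mconj X * A)
      = (FX A B R X)ᴴ * RX R B X * (RX R B X)⁻¹ * (RX R B X * FX A B R X) := by
    rw [FX_mul_RX A B R hR hX hux, RX_mul_FX B R A hux]
  have h3 : (FX A B R X)ᴴ * RX R B X * (RX R B X)⁻¹ = (FX A B R X)ᴴ := by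
    rw [Matrix.mul_assoc, Matrix.mul_nonsing_inv _ ((Matrix.isUnit_iff_isUnit_det _).mp hux),
      Matrix.mul_one]
  rw [Rop, h2, h3]

lemma kop_self (X : Matrix (Fin n) (Fin n) ℂ) : Kop A B R X X = 0 := by
  simp [Kop]

lemma id1 {X Y : Matrix (Fin n) (Fin n) ℂ} (H : Matrix (Fin n) (Fin n) ℂ)
    (hR : R.IsHermitian) (hX : X.IsHermitian) (hY : Y.IsHermitian)
    (hux : IsUnit (RX R B X)) :
    Rop A B R H X
      = (TX A B R Y)ᴴ * mconj X * TX A B R Y + HX A B R H Y - Kop A B R Y X := by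
  set f := FX A B R X with hf
  set g := FX A B R Y with hg
  set x := mconj X with hx'
  set ρ := RX R B X with hρ'
  have e1 : Bᴴ * x * A = ρ * f := (RX_mul_FX B R A hux).symm
  have e2 : Aᴴ * x * B = fᴴ * ρ := (FX_mul_RX A B R hR hX hux).symm
  have hρ : Bᴴ * x * B = ρ - R := by rw [hρ', RX]; abel
  have e1r : Bᴴ * (x * A) = ρ * f := by rw [← Matrix.mul_assoc]; exact e1
  have e2g : Aᴴ * (x * (B * g)) = fᴴ * (ρ * g) := by
    have := congrArg (fun M => M * g) e2
    simpa [Matrix.mul_assoc] using this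
  have hρg : Bᴴ * (x * (B * g)) = ρ * g - R * g := by
    have := congrArg (fun M => M * g) hρ
    simpa [Matrix.mul_assoc, Matrix.sub_mul] using this
  rw [Rop_eq A B R H hR hX hux, TX, HX, Kop, ← hf, ← hg, ← hx', ← hρ']
  simp only [Matrix.conjTranspose_sub, Matrix.conjTranspose_mul, Matrix.sub_mul,
    Matrix.mul_sub, Matrix.mul_assoc]
  have hρg2 : gᴴ * (Bᴴ * (x * (B * g))) = gᴴ * (ρ * g) - gᴴ * (R * g) := by
    rw [hρg, Matrix.mul_sub]
  rw [e1r, e2g, hρg2]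
  abel

lemma rop_closed {X : Matrix (Fin n) (Fin n) ℂ} (H : Matrix (Fin n) (Fin n) ℂ)
    (hR : R.IsHermitian) (hX : X.IsHermitian) (hux : IsUnit (RX R B X)) :
    Rop A B R H X = (TX A B R X)ᴴ * mconj X * TX A B R X + HX A B R H X := by
  have h := id1 A B R H hR hX hX hux
  rw [kop_self, sub_zero] at h
  exact h

lemma HX_isHermitian {X : Matrix (Fin n) (Fin n) ℂ} (H : Matrix (Fin n) (Fin n) ℂ)
    (hR : R.IsHermitian) (hH : H.IsHermitian) : (HX A B R H X).IsHermitian :=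
  hH.add (Matrix.isHermitian_conjTranspose_mul_mul _ hR)

lemma Rop_isHermitian {X : Matrix (Fin n) (Fin n) ℂ} (H : Matrix (Fin n) (Fin n) ℂ)
    (hR : R.IsHermitian) (hH : H.IsHermitian) (hX : X.IsHermitian)
    (hux : IsUnit (RX R B X)) : (Rop A B R H X).IsHermitian := by
  rw [rop_closed A B R H hR hX hux]
  exact (Matrix.isHermitian_conjTranspose_mul_mul _ (mconj_isHermitian hX)).add
    (HX_isHermitian A B R H hR hH)

lemma cstein_sub (T X Y : Matrix (Fin n) (Fin n) ℂ) :
    CStein T (X - Y) = CStein T X - CStein T Y := by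
  rw [CStein, CStein, CStein, mconj_sub]
  simp only [Matrix.mul_sub, Matrix.sub_mul, Matrix.mul_assoc]
  abel

lemma RX_shift (X Y : Matrix (Fin n) (Fin n) ℂ) :
    RX R B X = RX R B Y + Bᴴ * mconj (X - Y) * B := by
  rw [RX, RX, mconj_sub]
  simp only [Matrix.mul_sub, Matrix.sub_mul, Matrix.mul_assoc]
  abel

end Identities

section SpectrumHelpers

lemma mem_spectrum_of_eig {M : Matrix (Fin n) (Fin n) ℂ} {lam : ℂ} {v : Fin n → ℂ}
    (hv0 : v ≠ 0) (hv : M *ᵥ v = lam • v) : lam ∈ spectrum ℂ M := by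
  rw [spectrum.mem_iff]
  intro hu
  have hdet : (algebraMap ℂ (Matrix (Fin n) (Fin n) ℂ) lam - M).det ≠ 0 := by
    have := (Matrix.isUnit_iff_isUnit_det _).mp hu
    exact IsUnit.ne_zero this
  apply hdet
  rw [← Matrix.exists_mulVec_eq_zero_iff]
  refine ⟨v, hv0, ?_⟩
  rw [Matrix.sub_mulVec, hv, Matrix.algebraMap_eq_diagonal]
  ext i
  simp [Matrix.mulVec_diagonal]

lemma eig_of_mem_spectrum {M : Matrix (Fin n) (Fin n) ℂ} {lam : ℂ}
    (h : lam ∈ spectrum ℂ M) : ∃ v : Fin n → ℂ, v ≠ 0 ∧ M *ᵥ v = lam • v := by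
  rw [spectrum.mem_iff] at h
  have hdet : (algebraMap ℂ (Matrix (Fin n) (Fin n) ℂ) lam - M).det = 0 := by
    by_contra hd
    exact h ((Matrix.isUnit_iff_isUnit_det _).mpr (isUnit_iff_ne_zero.mpr hd))
  obtain ⟨v, hv0, hv⟩ := (Matrix.exists_mulVec_eq_zero_iff).mpr hdet
  refine ⟨v, hv0, ?_⟩
  rw [Matrix.sub_mulVec, sub_eq_zero, Matrix.algebraMap_eq_diagonal] at hv
  rw [← hv]
  ext i
  simp [Matrix.mulVec_diagonal]

lemma nnnorm_le_spectralRadius_of_mem {M : Matrix (Fin n) (Fin n) ℂ} {lam : ℂ}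
    (h : lam ∈ spectrum ℂ M) : (‖lam‖₊ : ℝ≥0∞) ≤ spectralRadius ℂ M := by
  rw [spectralRadius]
  exact le_iSup₂ (f := fun k (_ : k ∈ spectrum ℂ M) => (‖k‖₊ : ℝ≥0∞)) lam h

lemma spectralRadius_lt_one_of_forall {M : Matrix (Fin n) (Fin n) ℂ}
    (h : ∀ lam ∈ spectrum ℂ M, ‖lam‖₊ < 1) : spectralRadius ℂ M < 1 := by
  have hfin : (spectrum ℂ M).Finite := Matrix.finite_spectrum M
  have hle : spectralRadius ℂ M
      ≤ ((hfin.toFinset.sup fun l => ‖l‖₊ : ℝ≥0) : ℝ≥0∞) := by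
    rw [spectralRadius]
    refine iSup₂_le fun k hk => ?_
    exact_mod_cast ENNReal.coe_le_coe.mpr
      (Finset.le_sup (f := fun l => ‖l‖₊) (hfin.mem_toFinset.mpr hk))
  refine lt_of_le_of_lt hle ?_
  rw [show (1 : ℝ≥0∞) = ((1 : ℝ≥0) : ℝ≥0∞) from rfl, ENNReal.coe_lt_coe]
  rw [Finset.sup_lt_iff (by norm_num : (⊥ : ℝ≥0) < 1)]
  intro b hb
  exact h b (hfin.mem_toFinset.mp hb)

end SpectrumHelpers

section Stein

attribute [local instance] Matrix.linftyOpNormedAddCommGroup Matrix.linftyOpNormedRing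
  Matrix.linftyOpNormedAlgebra

lemma pow_mulVec_tendsto_zero {M : Matrix (Fin n) (Fin n) ℂ}
    (h : spectralRadius ℂ M < 1) (x : Fin n → ℂ) :
    Tendsto (fun k : ℕ => (M ^ k) *ᵥ x) atTop (𝓝 0) := by
  obtain ⟨c, hc1, hc2⟩ := ENNReal.lt_iff_exists_nnreal_btwn.mp h
  have hgel := spectrum.pow_nnnorm_pow_one_div_tendsto_nhds_spectralRadius M
  have hev : ∀ᶠ k : ℕ in atTop, (‖M ^ k‖₊ : ℝ≥0∞) ^ (1 / (k : ℝ)) < (c : ℝ≥0∞) :=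
    hgel.eventually_lt_const hc1
  have hevk : ∀ᶠ k : ℕ in atTop, ‖M ^ k‖ ≤ (c : ℝ) ^ k := by
    filter_upwards [hev, Filter.eventually_ge_atTop 1] with k hk hk1
    have hk0 : (k : ℝ) ≠ 0 := by positivity
    have h1 : ((‖M ^ k‖₊ : ℝ≥0∞) ^ (1 / (k : ℝ))) ^ (k : ℕ) < (c : ℝ≥0∞) ^ (k : ℕ) :=
      ENNReal.pow_lt_pow_left (by omega) hk
    rw [← ENNReal.rpow_natCast ((‖M ^ k‖₊ : ℝ≥0∞) ^ (1 / (k : ℝ))) k,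
      ← ENNReal.rpow_mul, one_div, inv_mul_cancel₀ hk0, ENNReal.rpow_one] at h1
    have h2 : (‖M ^ k‖₊ : ℝ≥0∞) < ((c ^ k : ℝ≥0) : ℝ≥0∞) := by
      rwa [ENNReal.coe_pow]
    have h3 : ‖M ^ k‖₊ ≤ c ^ k := (ENNReal.coe_lt_coe.mp h2).le
    calc ‖M ^ k‖ = ((‖M ^ k‖₊ : ℝ≥0) : ℝ) := rfl
    _ ≤ ((c ^ k : ℝ≥0) : ℝ) := by exact_mod_cast h3
    _ = (c : ℝ) ^ k := by push_cast; ring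
  have hnorm0 : Tendsto (fun k : ℕ => ‖M ^ k‖) atTop (𝓝 0) := by
    refine squeeze_zero' (Filter.Eventually.of_forall fun k => norm_nonneg _) hevk ?_
    exact tendsto_pow_atTop_nhds_zero_of_lt_one c.coe_nonneg (by exact_mod_cast hc2)
  have hmul : Tendsto (fun k : ℕ => ‖M ^ k‖ * ‖x‖) atTop (𝓝 0) := by
    simpa using hnorm0.mul_const ‖x‖
  refine squeeze_zero_norm' ?_ hmul
  filter_upwards with k
  exact Matrix.linfty_opNorm_mulVec _ _

lemma qf_continuous (D : Matrix (Fin n) (Fin n) ℂ) :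
    Continuous fun w : Fin n → ℂ => qf D w := by
  unfold qf
  exact (continuous_id.star).dotProduct (continuous_const.matrix_mulVec continuous_id)

lemma stein {C : Matrix (Fin n) (Fin n) ℂ} (hC : spectralRadius ℂ (hatM C) < 1)
    {D : Matrix (Fin n) (Fin n) ℂ} (hD : D.IsHermitian)
    (hQ : (CStein C D).PosSemidef) : D.PosSemidef := by
  classical
  set Φ : Matrix (Fin n) (Fin n) ℂ → Matrix (Fin n) (Fin n) ℂ :=
    fun Y => Cᴴ * mconj Y * C with hΦ
  have hΦsub : ∀ Y Z, Φ (Y - Z) = Φ Y - Φ Z := by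
    intro Y Z
    simp only [hΦ, mconj_sub, Matrix.mul_sub, Matrix.sub_mul]
  have hΦpsd : ∀ {Y}, Y.PosSemidef → (Φ Y).PosSemidef := by
    intro Y hY
    exact (mconj_posSemidef hY).conjTranspose_mul_mul_same C
  -- D - Φ^[k] D is PSD
  have hstep : ∀ k : ℕ, (D - Φ^[k] D).PosSemidef := by
    intro k
    induction k with
    | zero => simpa using Matrix.PosSemidef.zero
    | succ k ih =>
      have h1 : (Φ D - Φ^[k+1] D).PosSemidef := by
        rw [Function.iterate_succ_apply', ← hΦsub]
        exact hΦpsd ih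
      have h2 : (D - Φ D).PosSemidef := hQ
      have := h2.add h1
      rwa [sub_add_sub_cancel] at this
  -- Φ^[2k] D = ((hatM C)^k)ᴴ * D * (hatM C)^k
  have hΦΦ : ∀ Y, Φ (Φ Y) = (hatM C)ᴴ * Y * hatM C := by
    intro Y
    simp only [hΦ, hatM, mconj_mul, mconj_conjTranspose, mconj_mconj,
      Matrix.conjTranspose_mul, conjTranspose_mconj, Matrix.mul_assoc]
  have h2k : ∀ k : ℕ, Φ^[2 * k] D = ((hatM C) ^ k)ᴴ * D * (hatM C) ^ k := by
    intro k
    induction k with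
    | zero => simp
    | succ k ih =>
      have : 2 * (k + 1) = (2 * k) + 1 + 1 := by ring
      rw [this, Function.iterate_succ_apply', Function.iterate_succ_apply', ih, hΦΦ]
      simp only [pow_succ, Matrix.conjTranspose_mul, Matrix.mul_assoc]
  refine Matrix.PosSemidef.of_dotProduct_mulVec_nonneg hD fun x => ?_
  have key : ∀ k : ℕ, qf D ((hatM C ^ k) *ᵥ x) ≤ qf D x := by
    intro k
    have h1 := qf_nonneg (hstep (2 * k)) x
    rw [qf_sub, h2k k, qf_conj] at h1
    exact sub_nonneg.mp h1
  have hv0 : Tendsto (fun k : ℕ => qf D ((hatM C ^ k) *ᵥ x)) atTop (𝓝 0) := by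
    have h1 := (qf_continuous D).tendsto (0 : Fin n → ℂ)
    have h2 : Tendsto (fun k : ℕ => qf D ((hatM C ^ k) *ᵥ x)) atTop (𝓝 (qf D 0)) :=
      h1.comp (pow_mulVec_tendsto_zero hC x)
    have h3 : qf D (0 : Fin n → ℂ) = 0 := by simp [qf]
    rwa [h3] at h2
  have hre : 0 ≤ (qf D x).re := by
    refine le_of_tendsto ((Complex.continuous_re.tendsto 0).comp hv0) ?_
    filter_upwards with k
    exact (Complex.le_def.mp (key k)).1
  have him : (qf D x).im = 0 := by
    have h1 : Tendsto (fun k : ℕ => (qf D ((hatM C ^ k) *ᵥ x)).im) atTop (𝓝 0) :=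
      (Complex.continuous_im.tendsto 0).comp hv0
    have h2 : (fun k : ℕ => (qf D ((hatM C ^ k) *ᵥ x)).im)
        = fun _ => (qf D x).im := by
      funext k
      exact (Complex.le_def.mp (key k)).2
    rw [h2] at h1
    exact tendsto_nhds_unique tendsto_const_nhds h1
  show (0 : ℂ) ≤ qf D x
  rw [Complex.le_def]
  simp [hre, him]

end Stein

section KeyLemma

variable (A : Matrix (Fin n) (Fin n) ℂ) (B : Matrix (Fin n) (Fin m) ℂ)
  (R : Matrix (Fin m) (Fin m) ℂ)

lemma key (H : Matrix (Fin n) (Fin n) ℂ) (hR : R.IsHermitian) (hH : H.IsHermitian)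
    {XP : Matrix (Fin n) (Fin n) ℂ} (hXPh : XP.IsHermitian)
    (hRXP : (RX R B XP).PosDef) (hXPle : (Rop A B R H XP - XP).PosSemidef)
    {X : Matrix (Fin n) (Fin n) ℂ} (hX : X ∈ Sge A B R H) :
    (RX R B X).PosDef ∧ spectralRadius ℂ (hatM (TX A B R X)) < 1 ∧
      (X - Rop A B R H X).PosSemidef ∧ Rop A B R H X ∈ Sge A B R H := by
  obtain ⟨hXh, XT, hXTh, hXTu, hXTρ, hXW⟩ := hX
  have huP : IsUnit (RX R B XP) := hRXP.isUnit
  -- Step (i): X - XP is PSD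
  have hid1P : Rop A B R H XP = (TX A B R XT)ᴴ * mconj XP * TX A B R XT
      + HX A B R H XT - Kop A B R XT XP := id1 A B R H hR hXPh hXTh huP
  have hK1P : (Kop A B R XT XP).PosSemidef := by
    rw [Kop]
    exact hRXP.posSemidef.conjTranspose_mul_mul_same _
  have hcs : (CStein (TX A B R XT) (X - XP)).PosSemidef := by
    rw [cstein_sub]
    have h2 : CStein (TX A B R XT) X - CStein (TX A B R XT) XP
        = (CStein (TX A B R XT) X - HX A B R H XT)
          + (HX A B R H XT - CStein (TX A B R XT) XP) := by abel
    rw [h2]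
    refine hXW.add ?_
    have h3 : HX A B R H XT - CStein (TX A B R XT) XP
        = (Rop A B R H XP - XP) + Kop A B R XT XP := by
      rw [CStein, hid1P]; abel
    rw [h3]
    exact hXPle.add hK1P
  have hΔ : (X - XP).PosSemidef := stein hXTρ (hXh.sub hXPh) hcs
  -- Step (ii): RX X is positive definite
  have hRX : (RX R B X).PosDef := by
    rw [RX_shift B R X XP]
    exact hRXP.add_posSemidef ((mconj_posSemidef hΔ).conjTranspose_mul_mul_same B)
  have huX : IsUnit (RX R B X) := hRX.isUnit
  -- Step (iii): X - Rop X is PSD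
  have hid1X : Rop A B R H X = (TX A B R XT)ᴴ * mconj X * TX A B R XT
      + HX A B R H XT - Kop A B R XT X := id1 A B R H hR hXh hXTh huX
  have hKX : (Kop A B R XT X).PosSemidef := by
    rw [Kop]
    exact hRX.posSemidef.conjTranspose_mul_mul_same _
  have h4 : X - Rop A B R H X
      = (CStein (TX A B R XT) X - HX A B R H XT) + Kop A B R XT X := by
    rw [hid1X, CStein]; abel
  have hXRop : (X - Rop A B R H X).PosSemidef := by
    rw [h4]
    exact hXW.add hKX
  -- closed-form for Rop X
  have hclosed : Rop A B R H X
      = (TX A B R X)ᴴ * mconj X * TX A B R X + HX A B R H X :=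
    rop_closed A B R H hR hXh huX
  -- Step (iv): spectral radius of hatM (TX X) is < 1
  have hK2P : (Kop A B R X XP).PosSemidef := by
    rw [Kop]
    exact hRXP.posSemidef.conjTranspose_mul_mul_same _
  have hρT : spectralRadius ℂ (hatM (TX A B R X)) < 1 := by
    refine spectralRadius_lt_one_of_forall fun lam hlam => ?_
    by_contra hge
    push_neg at hge
    obtain ⟨v, hv0, hv⟩ := eig_of_mem_spectrum hlam
    have hid1PX : Rop A B R H XP = (TX A B R X)ᴴ * mconj XP * TX A B R X
        + HX A B R H X - Kop A B R X XP := id1 A B R H hR hXPh hXh huP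
    have MI : CStein (TX A B R X) (X - XP)
        = ((CStein (TX A B R XT) X - HX A B R H XT) + Kop A B R XT X)
          + ((Rop A B R H XP - XP) + Kop A B R X XP) := by
      rw [← h4, CStein, mconj_sub, Matrix.mul_sub, Matrix.sub_mul]
      have e5 : (TX A B R X)ᴴ * mconj X * TX A B R X
          = Rop A B R H X - HX A B R H X := by rw [hclosed]; abel
      have e6 : (TX A B R X)ᴴ * mconj XP * TX A B R X
          = Rop A B R H XP - HX A B R H X + Kop A B R X XP := by rw [hid1PX]; abel
      rw [e5, e6]; abel
    have hchain := chain (hXh.sub hXPh) hv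
    rw [MI] at hchain
    simp only [qf_add] at hchain
    -- the right-hand side is ≤ 0
    have hq : 0 ≤ qf (X - XP) v := qf_nonneg hΔ v
    have hlam2 : (1 : ℝ) ≤ Complex.normSq lam := by
      have h1 : (1 : ℝ) ≤ ‖lam‖ := by exact_mod_cast hge
      calc (1 : ℝ) ≤ ‖lam‖ := h1
      _ ≤ ‖lam‖ * ‖lam‖ := le_mul_of_one_le_left (norm_nonneg _) h1
      _ = Complex.normSq lam := by rw [Complex.normSq_eq_norm_sq]; ring
    have hrhs : (1 - lam * star lam) * qf (X - XP) v ≤ 0 := by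
      have hls : lam * star lam = (Complex.normSq lam : ℂ) := by
        rw [Complex.star_def, Complex.mul_conj]
      rw [hls]
      have h7 : 0 ≤ ((Complex.normSq lam : ℂ) - 1) * qf (X - XP) v := by
        apply mul_nonneg _ hq
        rw [sub_nonneg]
        exact_mod_cast Complex.real_le_real.mpr hlam2
      have h8 : (1 - (Complex.normSq lam : ℂ)) * qf (X - XP) v
          = -(((Complex.normSq lam : ℂ) - 1) * qf (X - XP) v) := by ring
      rw [h8]
      exact neg_nonpos.mpr h7
    -- all eight summands are nonnegative
    have nn1 := qf_nonneg hXW v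
    have nn2 := qf_nonneg hXW (star (TX A B R X *ᵥ v))
    have nn3 := qf_nonneg hKX v
    have nn4 := qf_nonneg hKX (star (TX A B R X *ᵥ v))
    have nn5 := qf_nonneg hXPle v
    have nn6 := qf_nonneg hXPle (star (TX A B R X *ᵥ v))
    have nn7 := qf_nonneg hK2P v
    have nn8 := qf_nonneg hK2P (star (TX A B R X *ᵥ v))
    have hK3v : qf (Kop A B R XT X) v = 0 := by
      refine le_antisymm ?_ nn3
      have hle : qf (Kop A B R XT X) v
          + (qf (CStein (TX A B R XT) X - HX A B R H XT) v
            + qf (CStein (TX A B R XT) X - HX A B R H XT) (star (TX A B R X *ᵥ v))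
            + qf (Kop A B R XT X) (star (TX A B R X *ᵥ v))
            + qf (Rop A B R H XP - XP) v
            + qf (Rop A B R H XP - XP) (star (TX A B R X *ᵥ v))
            + qf (Kop A B R X XP) v
            + qf (Kop A B R X XP) (star (TX A B R X *ᵥ v))) ≤ 0 := by
        calc _ = (1 - lam * star lam) * qf (X - XP) v := by rw [← hchain]; ring
        _ ≤ 0 := hrhs
      have htail : 0 ≤ qf (CStein (TX A B R XT) X - HX A B R H XT) v
            + qf (CStein (TX A B R XT) X - HX A B R H XT) (star (TX A B R X *ᵥ v))
            + qf (Kop A B R XT X) (star (TX A B R X *ᵥ v))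
            + qf (Rop A B R H XP - XP) v
            + qf (Rop A B R H XP - XP) (star (TX A B R X *ᵥ v))
            + qf (Kop A B R X XP) v
            + qf (Kop A B R X XP) (star (TX A B R X *ᵥ v)) := by
        exact add_nonneg (add_nonneg (add_nonneg (add_nonneg (add_nonneg
          (add_nonneg nn1 nn2) nn4) nn5) nn6) nn7) nn8
      exact le_trans (le_add_of_nonneg_right htail) hle
    have hK3u : qf (Kop A B R XT X) (star (TX A B R X *ᵥ v)) = 0 := by
      refine le_antisymm ?_ nn4
      have hle : qf (Kop A B R XT X) (star (TX A B R X *ᵥ v))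
          + (qf (CStein (TX A B R XT) X - HX A B R H XT) v
            + qf (CStein (TX A B R XT) X - HX A B R H XT) (star (TX A B R X *ᵥ v))
            + qf (Kop A B R XT X) v
            + qf (Rop A B R H XP - XP) v
            + qf (Rop A B R H XP - XP) (star (TX A B R X *ᵥ v))
            + qf (Kop A B R X XP) v
            + qf (Kop A B R X XP) (star (TX A B R X *ᵥ v))) ≤ 0 := by
        calc _ = (1 - lam * star lam) * qf (X - XP) v := by rw [← hchain]; ring
        _ ≤ 0 := hrhs
      have htail : 0 ≤ qf (CStein (TX A B R XT) X - HX A B R H XT) v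
            + qf (CStein (TX A B R XT) X - HX A B R H XT) (star (TX A B R X *ᵥ v))
            + qf (Kop A B R XT X) v
            + qf (Rop A B R H XP - XP) v
            + qf (Rop A B R H XP - XP) (star (TX A B R X *ᵥ v))
            + qf (Kop A B R X XP) v
            + qf (Kop A B R X XP) (star (TX A B R X *ᵥ v)) := by
        exact add_nonneg (add_nonneg (add_nonneg (add_nonneg (add_nonneg
          (add_nonneg nn1 nn2) nn3) nn5) nn6) nn7) nn8
      exact le_trans (le_add_of_nonneg_right htail) hle
    -- hence (FX XT - FX X) kills v and star u
    have hDv : (FX A B R XT - FX A B R X) *ᵥ v = 0 := by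
      rw [Kop, qf_conj] at hK3v
      by_contra hne
      exact (hRX.dotProduct_mulVec_pos hne).ne' hK3v
    have hDu : (FX A B R XT - FX A B R X) *ᵥ (star (TX A B R X *ᵥ v)) = 0 := by
      rw [Kop, qf_conj] at hK3u
      by_contra hne
      exact (hRX.dotProduct_mulVec_pos hne).ne' hK3u
    -- S agrees with T on v and star u
    have hST : TX A B R XT - TX A B R X
        = -(B * (FX A B R XT - FX A B R X)) := by
      rw [TX, TX, Matrix.mul_sub]
      abel
    have hSv : TX A B R XT *ᵥ v = TX A B R X *ᵥ v := by
      have h10 : (TX A B R XT - TX A B R X) *ᵥ v = 0 := by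
        rw [hST, Matrix.neg_mulVec, ← Matrix.mulVec_mulVec, hDv, Matrix.mulVec_zero, neg_zero]
      rw [Matrix.sub_mulVec, sub_eq_zero] at h10
      exact h10
    have hTu : TX A B R X *ᵥ (star (TX A B R X *ᵥ v)) = star lam • star v :=
      mulVec_star_of_hat hv
    have hSu : TX A B R XT *ᵥ (star (TX A B R X *ᵥ v)) = star lam • star v := by
      have h10 : (TX A B R XT - TX A B R X) *ᵥ (star (TX A B R X *ᵥ v)) = 0 := by
        rw [hST, Matrix.neg_mulVec, ← Matrix.mulVec_mulVec, hDu, Matrix.mulVec_zero, neg_zero]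
      rw [Matrix.sub_mulVec, sub_eq_zero] at h10
      rw [h10, hTu]
    -- lam is an eigenvalue of hatM (TX XT)
    have hSS : hatM (TX A B R XT) *ᵥ v = lam • v := by
      rw [hatM, ← Matrix.mulVec_mulVec, hSv, mconj_mulVec, hSu, star_smul, star_star, star_star]
    have hmem := mem_spectrum_of_eig hv0 hSS
    have hlt : (‖lam‖₊ : ℝ≥0∞) < 1 :=
      lt_of_le_of_lt (nnnorm_le_spectralRadius_of_mem hmem) hXTρ
    have hge' : (1 : ℝ≥0∞) ≤ (‖lam‖₊ : ℝ≥0∞) := by exact_mod_cast hge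
    exact absurd hlt (not_lt.mpr hge')
  -- Step (v): Rop X ∈ Sge
  have hRopH : (Rop A B R H X).IsHermitian := Rop_isHermitian A B R H hR hH hXh huX
  have hmem : Rop A B R H X ∈ Sge A B R H := by
    refine ⟨hRopH, X, hXh, huX, hρT, ?_⟩
    have e7 : CStein (TX A B R X) (Rop A B R H X) - HX A B R H X
        = (TX A B R X)ᴴ * mconj (X - Rop A B R H X) * TX A B R X := by
      rw [CStein, mconj_sub, Matrix.mul_sub, Matrix.sub_mul]
      have e8 : (TX A B R X)ᴴ * mconj X * TX A B R X
          = Rop A B R H X - HX A B R H X := by rw [hclosed]; abel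
      rw [e8]; abel
    rw [e7]
    exact (mconj_posSemidef hXRop).conjTranspose_mul_mul_same _
  exact ⟨hRX, hρT, hXRop, hmem⟩

end KeyLemma

theorem theorem_3_1_i' (A : Matrix (Fin n) (Fin n) ℂ) (B : Matrix (Fin n) (Fin m) ℂ)
    (R : Matrix (Fin m) (Fin m) ℂ) (H : Matrix (Fin n) (Fin n) ℂ)
    (hR : R.IsHermitian) (hH : H.IsHermitian)
    (hP : ∃ XP : Matrix (Fin n) (Fin n) ℂ, XP.IsHermitian ∧ (RX R B XP).PosDef ∧
      (Rop A B R H XP - XP).PosSemidef)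
    (X : ℕ → Matrix (Fin n) (Fin n) ℂ)
    (hX0 : X 0 ∈ Sge A B R H)
    (hrec : ∀ k : ℕ, X (k + 1) = Rop A B R H (X k)) :
    ∀ k : ℕ, (RX R B (X k)).PosDef ∧ X k ∈ Sge A B R H ∧
      spectralRadius ℂ (hatM (TX A B R (X k))) < 1 ∧
      (X k - Rop A B R H (X k)).PosSemidef := by
  obtain ⟨XP, hXPh, hRXP, hXPle⟩ := hP
  have hmem : ∀ k : ℕ, X k ∈ Sge A B R H := by
    intro k
    induction k with
    | zero => exact hX0
    | succ k ih =>
      rw [hrec k]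
      exact (key A B R H hR hH hXPh hRXP hXPle ih).2.2.2
  intro k
  obtain ⟨h1, h2, h3, _⟩ := key A B R H hR hH hXPh hRXP hXPle (hmem k)
  exact ⟨h1, hmem k, h2, h3⟩

end AuxiliaryLemmas

/-- Theorem 3.1(i): the fixed-point iteration `X_{k+1} = R(X_k)` starting in `S_≥` is
well-defined, and each iterate lies in `S_≥`, has `ρ(T̂_{X_k}) < 1`, `R_{X_k} ≻ 0`,
and satisfies `X_k ≥ R(X_k)`. -/
theorem theorem_3_1_i (n m : ℕ) (A : Matrix (Fin n) (Fin n) ℂ) (B : Matrix (Fin n) (Fin m) ℂ)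
    (R : Matrix (Fin m) (Fin m) ℂ) (H : Matrix (Fin n) (Fin n) ℂ)
    (hR : R.IsHermitian) (hRunit : IsUnit R) (hH : H.IsHermitian)
    (hP : ∃ XP : Matrix (Fin n) (Fin n) ℂ, XP.IsHermitian ∧ (RX R B XP).PosDef ∧
      (Rop A B R H XP - XP).PosSemidef)
    (hT : ∃ XT : Matrix (Fin n) (Fin n) ℂ, XT.IsHermitian ∧ IsUnit (RX R B XT) ∧
      spectralRadius ℂ (hatM (TX A B R XT)) < 1)
    (X : ℕ → Matrix (Fin n) (Fin n) ℂ)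
    (hX0 : X 0 ∈ Sge A B R H)
    (hrec : ∀ k : ℕ, X (k + 1) = Rop A B R H (X k)) :
    ∀ k : ℕ, (RX R B (X k)).PosDef ∧ X k ∈ Sge A B R H ∧
      spectralRadius ℂ (hatM (TX A B R (X k))) < 1 ∧
      (X k - Rop A B R H (X k)).PosSemidef :=
  theorem_3_1_i' A B R H hR hH hP X hX0 hrec

end CDARE
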